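/- Let G be a (2P_2, \overline{P_2+P_3})-free atom containing an induced 5-cycle on vertices v_1,…,v_5. Then for every i ∈ {1,…,5} (indices modulo 5), there is at most one edge between V_{{i,i+2}} and V_{{i,i-2}}; that is, there is at most one pair (x,y) with x ∈ V_{{i,i+2}}, y ∈ V_{{i,i-2}}, and x adjacent to y. -/

import Mathlib

open SimpleGraph

/-- The graph `2P₂`: two disjoint edges, on vertex set `Fin 4`. -/
def twoP2 : SimpleGraph (Fin 4) :=
  SimpleGraph.fromRel (fun a b => (a = 0 ∧ b = 1) ∨ (a = 2 ∧ b = 3))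

/-- The graph `P₂ + P₃`: disjoint union of a path on 2 vertices (0-1)
and a path on 3 vertices (2-3-4), on vertex set `Fin 5`. -/
def P2P3 : SimpleGraph (Fin 5) :=
  SimpleGraph.fromRel (fun a b => (a = 0 ∧ b = 1) ∨ (a = 2 ∧ b = 3) ∨ (a = 3 ∧ b = 4))

/-- `G` is `H`-free: `G` contains no induced subgraph isomorphic to `H`. -/
def Free {W V : Type*} (H : SimpleGraph W) (G : SimpleGraph V) : Prop :=
  IsEmpty (H ↪g G)

/-- `G` has no clique cut-set: for every clique `K`, deleting the vertices of `K`
does not disconnect the graph.  A graph with this property is called an atom. -/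
def NoCliqueCutset {V : Type*} (G : SimpleGraph V) : Prop :=
  ∀ K : Set V, G.IsClique K → (G.induce (Kᶜ : Set V)).Preconnected

/-- For `S ⊆ Fin 5`, the set of vertices `x` outside the cycle `v 0, …, v 4` whose
neighbourhood on the cycle is exactly `{v i : i ∈ S}`. -/
def vSet {V : Type*} (G : SimpleGraph V) (v : Fin 5 → V) (S : Set (Fin 5)) : Set V :=
  {x | (∀ i, x ≠ v i) ∧ ∀ i, (G.Adj x (v i) ↔ i ∈ S)}

lemma no_twoP2 {V : Type*} {G : SimpleGraph V} (h : _root_.Free twoP2 G) {a b c d : V}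
    (hab : G.Adj a b) (hcd : G.Adj c d)
    (hac : ¬ G.Adj a c) (had : ¬ G.Adj a d)
    (hbc : ¬ G.Adj b c) (hbd : ¬ G.Adj b d) : False := by
  have nac : a ≠ c := by rintro rfl; exact had hcd
  have nad : a ≠ d := by rintro rfl; exact hac hcd.symm
  have nbc : b ≠ c := by rintro rfl; exact hbd hcd
  have nbd : b ≠ d := by rintro rfl; exact hbc hcd.symm
  have hca : ¬ G.Adj c a := fun h => hac h.symm
  have hda : ¬ G.Adj d a := fun h => had h.symm
  have hcb : ¬ G.Adj c b := fun h => hbc h.symm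
  have hdb : ¬ G.Adj d b := fun h => hbd h.symm
  refine h.false ⟨⟨![a,b,c,d], ?_⟩, ?_⟩
  · intro x y hxy
    fin_cases x <;> fin_cases y <;>
      simp_all [hab.ne, hab.ne', hcd.ne, hcd.ne', nac, nad, nbc, nbd, nac.symm, nad.symm, nbc.symm, nbd.symm]
  · intro x y
    show G.Adj (![a,b,c,d] x) (![a,b,c,d] y) ↔ twoP2.Adj x y
    fin_cases x <;> fin_cases y <;>
      simp_all [twoP2, SimpleGraph.fromRel_adj, G.irrefl, hab, hcd, hab.symm, hcd.symm,
        hac, had, hbc, hbd, hca, hda, hcb, hdb]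

/-- Pattern of co-(P2+P3): `a,b` nonadjacent, `c~e`, `d` nonadjacent to `c,e`,
and `a,b` complete to `{c,d,e}`. -/
lemma no_coP2P3 {V : Type*} {G : SimpleGraph V} (h : _root_.Free (P2P3ᶜ) G) {a b c d e : V}
    (nab : a ≠ b) (ncd : c ≠ d) (nde : d ≠ e)
    (hab : ¬ G.Adj a b) (hcd : ¬ G.Adj c d) (hde : ¬ G.Adj d e)
    (hac : G.Adj a c) (had : G.Adj a d) (hae : G.Adj a e)
    (hbc : G.Adj b c) (hbd : G.Adj b d) (hbe : G.Adj b e)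
    (hce : G.Adj c e) : False := by
  have nce : c ≠ e := hce.ne
  have nca : c ≠ a := hac.ne'
  have nda : d ≠ a := had.ne'
  have nea : e ≠ a := hae.ne'
  have ncb : c ≠ b := hbc.ne'
  have ndb : d ≠ b := hbd.ne'
  have neb : e ≠ b := hbe.ne'
  have hba : ¬ G.Adj b a := fun h' => hab h'.symm
  have hdc : ¬ G.Adj d c := fun h' => hcd h'.symm
  have hed : ¬ G.Adj e d := fun h' => hde h'.symm
  refine h.false ⟨⟨![a,b,c,d,e], ?_⟩, ?_⟩
  · intro x y hxy
    fin_cases x <;> fin_cases y <;>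
      simp_all [nab, nab.symm, ncd, ncd.symm, nde, nde.symm, nce, nce.symm,
        nca, nca.symm, nda, nda.symm, nea, nea.symm, ncb, ncb.symm, ndb, ndb.symm, neb, neb.symm]
  · intro x y
    show G.Adj (![a,b,c,d,e] x) (![a,b,c,d,e] y) ↔ P2P3ᶜ.Adj x y
    fin_cases x <;> fin_cases y <;>
      simp_all [P2P3, SimpleGraph.compl_adj, SimpleGraph.fromRel_adj, G.irrefl,
        hab, hcd, hde, hba, hdc, hed, hac, had, hae, hbc, hbd, hbe, hce,
        hac.symm, had.symm, hae.symm, hbc.symm, hbd.symm, hbe.symm, hce.symm]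

theorem clm_C5_V13_V35_almost_anticomplete {V : Type*} [Fintype V] (G : SimpleGraph V)
    (hfree1 : _root_.Free twoP2 G) (hfree2 : _root_.Free (P2P3ᶜ) G)
    (hatom : NoCliqueCutset G)
    (v : Fin 5 → V) (hv : Function.Injective v)
    (hC : ∀ i j : Fin 5, G.Adj (v i) (v j) ↔ (j = i + 1 ∨ i = j + 1)) :
    ∀ i : Fin 5, ∀ x ∈ vSet G v {i, i + 2}, ∀ y ∈ vSet G v {i, i - 2},
      ∀ x' ∈ vSet G v {i, i + 2}, ∀ y' ∈ vSet G v {i, i - 2},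
      G.Adj x y → G.Adj x' y' → x = x' ∧ y = y' := by
  intro i x hx y hy x' hx' y' hy' hxy hx'y'
  -- Fin 5 arithmetic facts
  have F1 : ∀ j : Fin 5, j + 1 ≠ j := by decide
  have F2 : ∀ j : Fin 5, j + 1 ≠ j + 2 := by decide
  have F3 : ∀ j : Fin 5, j + 1 ≠ j - 2 := by decide
  have F4 : ∀ j : Fin 5, j + 2 ≠ j := by decide
  have F5 : ∀ j : Fin 5, j + 2 ≠ j - 2 := by decide
  have F6 : ∀ j : Fin 5, j - 2 ≠ j := by decide
  have F7 : ∀ j : Fin 5, j - 1 ≠ j := by decide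
  have F8 : ∀ j : Fin 5, j - 1 ≠ j + 2 := by decide
  have F9 : ∀ j : Fin 5, j - 1 ≠ j - 2 := by decide
  -- cycle adjacencies
  have cyc12 : G.Adj (v (i + 1)) (v (i + 2)) := (hC _ _).2 (Or.inl ((show ∀ j : Fin 5, j + 2 = j + 1 + 1 by decide) i))
  have cyc92 : G.Adj (v (i - 1)) (v (i - 2)) := (hC _ _).2 (Or.inr ((show ∀ j : Fin 5, j - 1 = j - 2 + 1 by decide) i))
  have D1 : ∀ j : Fin 5, ¬ (j = j - 2 + 1 ∨ j - 2 = j + 1) := by decide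
  have D2 : ∀ j : Fin 5, ¬ (j = j + 2 + 1 ∨ j + 2 = j + 1) := by decide
  have cyc02 : ¬ G.Adj (v (i - 2)) (v i) := by rw [hC]; exact D1 i
  have cyc02' : ¬ G.Adj (v (i + 2)) (v i) := by rw [hC]; exact D2 i
  -- unpack vSet memberships
  have unpack13 : ∀ z, z ∈ vSet G v {i, i + 2} →
      (∀ j, z ≠ v j) ∧ (G.Adj z (v i)) ∧ (G.Adj z (v (i + 2))) ∧
      (∀ j, j ≠ i → j ≠ i + 2 → ¬ G.Adj z (v j)) := by
    intro z hz
    obtain ⟨h1, h2⟩ := hz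
    have h2' : ∀ j, G.Adj z (v j) ↔ (j = i ∨ j = i + 2) := fun j => (h2 j).trans (by simp)
    exact ⟨h1, (h2' i).2 (Or.inl rfl), (h2' (i + 2)).2 (Or.inr rfl),
      fun j hj1 hj2 h => ((h2' j).1 h).elim hj1 hj2⟩
  have unpack35 : ∀ z, z ∈ vSet G v {i, i - 2} →
      (∀ j, z ≠ v j) ∧ (G.Adj z (v i)) ∧ (G.Adj z (v (i - 2))) ∧
      (∀ j, j ≠ i → j ≠ i - 2 → ¬ G.Adj z (v j)) := by
    intro z hz
    obtain ⟨h1, h2⟩ := hz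
    have h2' : ∀ j, G.Adj z (v j) ↔ (j = i ∨ j = i - 2) := fun j => (h2 j).trans (by simp)
    exact ⟨h1, (h2' i).2 (Or.inl rfl), (h2' (i - 2)).2 (Or.inr rfl),
      fun j hj1 hj2 h => ((h2' j).1 h).elim hj1 hj2⟩
  -- independence of the two sets
  have indep13 : ∀ z1 z2, z1 ∈ vSet G v {i, i + 2} → z2 ∈ vSet G v {i, i + 2} →
      ¬ G.Adj z1 z2 := by
    intro z1 z2 hz1 hz2 hadj
    obtain ⟨-, -, -, hn1⟩ := unpack13 z1 hz1
    obtain ⟨-, -, -, hn2⟩ := unpack13 z2 hz2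
    exact no_twoP2 hfree1 hadj cyc92
      (hn1 _ (F7 i) (F8 i)) (hn1 _ (F6 i) (F5 i).symm)
      (hn2 _ (F7 i) (F8 i)) (hn2 _ (F6 i) (F5 i).symm)
  have indep35 : ∀ z1 z2, z1 ∈ vSet G v {i, i - 2} → z2 ∈ vSet G v {i, i - 2} →
      ¬ G.Adj z1 z2 := by
    intro z1 z2 hz1 hz2 hadj
    obtain ⟨-, -, -, hn1⟩ := unpack35 z1 hz1
    obtain ⟨-, -, -, hn2⟩ := unpack35 z2 hz2
    exact no_twoP2 hfree1 hadj cyc12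
      (hn1 _ (F1 i) (F3 i)) (hn1 _ (F4 i) (F5 i))
      (hn2 _ (F1 i) (F3 i)) (hn2 _ (F4 i) (F5 i))
  -- a vertex of V_{i,i+2} has at most one neighbour in V_{i,i-2}
  have uniq35 : ∀ x0 y1 y2, x0 ∈ vSet G v {i, i + 2} → y1 ∈ vSet G v {i, i - 2} →
      y2 ∈ vSet G v {i, i - 2} → y1 ≠ y2 → G.Adj x0 y1 → G.Adj x0 y2 → False := by
    intro x0 y1 y2 hx0 hy1 hy2 hne h1 h2
    obtain ⟨hx0v, hx0i, hx0i2, hx0n⟩ := unpack13 x0 hx0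
    obtain ⟨hy1v, hy1i, hy1i2, -⟩ := unpack35 y1 hy1
    obtain ⟨hy2v, hy2i, hy2i2, -⟩ := unpack35 y2 hy2
    exact no_coP2P3 hfree2 hne (hx0v (i - 2)) (hv.ne (F6 i))
      (indep35 y1 y2 hy1 hy2) (hx0n _ (F6 i) (Ne.symm (F5 i))) cyc02
      h1.symm hy1i2 hy1i h2.symm hy2i2 hy2i hx0i
  -- a vertex of V_{i,i-2} has at most one neighbour in V_{i,i+2}
  have uniq13 : ∀ y0 x1 x2, y0 ∈ vSet G v {i, i - 2} → x1 ∈ vSet G v {i, i + 2} →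
      x2 ∈ vSet G v {i, i + 2} → x1 ≠ x2 → G.Adj x1 y0 → G.Adj x2 y0 → False := by
    intro y0 x1 x2 hy0 hx1 hx2 hne h1 h2
    obtain ⟨hy0v, hy0i, hy0i2, hy0n⟩ := unpack35 y0 hy0
    obtain ⟨hx1v, hx1i, hx1i2, -⟩ := unpack13 x1 hx1
    obtain ⟨hx2v, hx2i, hx2i2, -⟩ := unpack13 x2 hx2
    exact no_coP2P3 hfree2 hne (hy0v (i + 2)) (hv.ne (F4 i))
      (indep13 x1 x2 hx1 hx2) (hy0n _ (F4 i) (F5 i)) cyc02'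
      h1 hx1i2 hx1i h2 hx2i2 hx2i hy0i
  -- main argument
  by_cases hxx : x = x'
  · subst hxx
    refine ⟨rfl, ?_⟩
    by_contra hne
    exact uniq35 x y y' hx hy hy' hne hxy hx'y'
  · exfalso
    by_cases hyy : y = y'
    · subst hyy
      exact uniq13 y x x' hy hx hx' hxx hxy hx'y'
    · have hxy' : ¬ G.Adj x y' := fun h => uniq35 x y y' hx hy hy' hyy hxy h
      have hx'y : ¬ G.Adj x' y := fun h => uniq13 y x x' hy hx hx' hxx hxy h
      exact no_twoP2 hfree1 hxy hx'y' (indep13 x x' hx hx') hxy'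
        (fun h => hx'y h.symm) (indep35 y y' hy hy')
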